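/- A finite simple graph G is König-Egerváry if and only if |diadem(G)| + |nucleus(G)| = 2α(G). -/

import Mathlib

open Set

variable {V : Type*} [Fintype V]

/-- `S` is an independent set in `G`: no two of its vertices are adjacent. -/
def IsIndep (G : SimpleGraph V) (S : Set V) : Prop :=
  ∀ u ∈ S, ∀ v ∈ S, ¬ G.Adj u v

/-- The neighborhood `N(X)` of a set of vertices. -/
def nbhd (G : SimpleGraph V) (X : Set V) : Set V := {v | ∃ u ∈ X, G.Adj u v}

/-- The difference `d(X) = |X| - |N(X)|` computed in the induced subgraph `G[W]`
(neighborhoods are intersected with `W`). -/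
noncomputable def dOn (G : SimpleGraph V) (W X : Set V) : ℤ :=
  (X.ncard : ℤ) - ((nbhd G X ∩ W).ncard : ℤ)

/-- The difference `d(X) = |X| - |N(X)|` in `G`. -/
noncomputable def dG (G : SimpleGraph V) (X : Set V) : ℤ := dOn G Set.univ X

/-- `S` is a critical independent set of the induced subgraph `G[W]`:
it is an independent subset of `W` whose difference attains
`max {d(Y) : Y ⊆ W}` (the critical difference of `G[W]`). -/
def IsCritIndepOn (G : SimpleGraph V) (W S : Set V) : Prop :=
  S ⊆ W ∧ IsIndep G S ∧ ∀ Y ⊆ W, dOn G W Y ≤ dOn G W S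

/-- `S` is a critical independent set of `G`. -/
def IsCritIndep (G : SimpleGraph V) (S : Set V) : Prop := IsCritIndepOn G Set.univ S

/-- A maximum critical independent set of `G[W]`: a critical independent set of
largest cardinality. -/
def IsMaxCritIndepOn (G : SimpleGraph V) (W S : Set V) : Prop :=
  IsCritIndepOn G W S ∧ ∀ T, IsCritIndepOn G W T → T.ncard ≤ S.ncard

/-- A maximum critical independent set of `G`. -/
def IsMaxCritIndep (G : SimpleGraph V) (S : Set V) : Prop := IsMaxCritIndepOn G Set.univ S

/-- A maximum independent set of the induced subgraph `G[W]`. -/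
def IsMaxIndepOn (G : SimpleGraph V) (W S : Set V) : Prop :=
  S ⊆ W ∧ IsIndep G S ∧ ∀ T ⊆ W, IsIndep G T → T.ncard ≤ S.ncard

/-- A maximum independent set of `G`. -/
def IsMaxIndep (G : SimpleGraph V) (S : Set V) : Prop := IsMaxIndepOn G Set.univ S

/-- The independence number of the induced subgraph `G[W]`. -/
noncomputable def alphaOn (G : SimpleGraph V) (W : Set V) : ℕ :=
  sSup {n | ∃ S ⊆ W, IsIndep G S ∧ S.ncard = n}

/-- The independence number `α(G)`. -/
noncomputable def alpha (G : SimpleGraph V) : ℕ := alphaOn G Set.univ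

/-- The maximum matching number `μ(G)`. -/
noncomputable def mu (G : SimpleGraph V) : ℕ :=
  sSup {n | ∃ M : G.Subgraph, M.IsMatching ∧ M.edgeSet.ncard = n}

/-- `G` is a König-Egerváry graph: `α(G) + μ(G) = |V(G)|`. -/
def IsKE (G : SimpleGraph V) : Prop := alpha G + mu G = Fintype.card V

/-- `nucleus(G[W])`: intersection of all maximum critical independent sets of `G[W]`. -/
def nucleusOn (G : SimpleGraph V) (W : Set V) : Set V := ⋂₀ {S | IsMaxCritIndepOn G W S}

/-- `nucleus(G)`. -/
def nucleus (G : SimpleGraph V) : Set V := nucleusOn G Set.univ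

/-- `diadem(G[W])`: union of all maximum critical independent sets of `G[W]`. -/
def diademOn (G : SimpleGraph V) (W : Set V) : Set V := ⋃₀ {S | IsMaxCritIndepOn G W S}

/-- `diadem(G)`. -/
def diadem (G : SimpleGraph V) : Set V := diademOn G Set.univ

/-- `ker(G)`: intersection of all critical independent sets of `G`. -/
def kerG (G : SimpleGraph V) : Set V := ⋂₀ {S | IsCritIndep G S}

/-- `core(G)`: intersection of all maximum independent sets of `G`. -/
def core (G : SimpleGraph V) : Set V := ⋂₀ {S | IsMaxIndep G S}

/-- `corona(G)`: union of all maximum independent sets of `G`. -/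
def corona (G : SimpleGraph V) : Set V := ⋃₀ {S | IsMaxIndep G S}


set_option linter.unusedSectionVars false
set_option maxHeartbeats 1000000
section KE13
variable {V : Type*} [Fintype V] {G : SimpleGraph V}

open Set

/-- criticality (without independence). -/
def Crit (G : SimpleGraph V) (X : Set V) : Prop := ∀ Y : Set V, dG G Y ≤ dG G X

lemma dG_def (X : Set V) : dG G X = (X.ncard : ℤ) - ((nbhd G X).ncard : ℤ) := by
  simp [dG, dOn]

lemma critIndep_iff (S : Set V) : IsCritIndep G S ↔ IsIndep G S ∧ Crit G S := by
  constructor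
  · rintro ⟨-, hi, hc⟩
    exact ⟨hi, fun Y => by simpa [dG] using hc Y (subset_univ Y)⟩
  · rintro ⟨hi, hc⟩
    exact ⟨subset_univ S, hi, fun Y _ => by simpa [dG] using hc Y⟩

lemma maxCritIndep_iff (S : Set V) :
    IsMaxCritIndep G S ↔ IsCritIndep G S ∧ ∀ T, IsCritIndep G T → T.ncard ≤ S.ncard :=
  Iff.rfl

lemma nbhd_mono {X Y : Set V} (h : X ⊆ Y) : nbhd G X ⊆ nbhd G Y := by
  rintro v ⟨u, hu, ha⟩; exact ⟨u, h hu, ha⟩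

lemma nbhd_union (X Y : Set V) : nbhd G (X ∪ Y) = nbhd G X ∪ nbhd G Y := by
  ext v; constructor
  · rintro ⟨u, hu | hu, ha⟩
    · exact Or.inl ⟨u, hu, ha⟩
    · exact Or.inr ⟨u, hu, ha⟩
  · rintro (⟨u, hu, ha⟩ | ⟨u, hu, ha⟩)
    · exact ⟨u, Or.inl hu, ha⟩
    · exact ⟨u, Or.inr hu, ha⟩

lemma indep_disj_nbhd {S : Set V} (h : IsIndep G S) (v : V) (hv : v ∈ S) :
    v ∉ nbhd G S := by
  rintro ⟨u, hu, ha⟩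
  exact h u hu v hv ha

lemma supermod (X Y : Set V) : dG G X + dG G Y ≤ dG G (X ∪ Y) + dG G (X ∩ Y) := by
  have h1 : (X ∪ Y).ncard + (X ∩ Y).ncard = X.ncard + Y.ncard :=
    Set.ncard_union_add_ncard_inter X Y
  have h2 : (nbhd G (X ∪ Y)).ncard + (nbhd G X ∩ nbhd G Y).ncard
      = (nbhd G X).ncard + (nbhd G Y).ncard := by
    rw [nbhd_union]; exact Set.ncard_union_add_ncard_inter _ _
  have h3 : (nbhd G (X ∩ Y)).ncard ≤ (nbhd G X ∩ nbhd G Y).ncard := by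
    apply Set.ncard_le_ncard _ (Set.toFinite _)
    exact subset_inter (nbhd_mono inter_subset_left) (nbhd_mono inter_subset_right)
  simp only [dG_def]
  push_cast
  omega

lemma Crit.union {X Y : Set V} (hX : Crit G X) (hY : Crit G Y) : Crit G (X ∪ Y) := by
  intro Z
  have := supermod (G := G) X Y
  have h1 := hX (X ∩ Y)
  have h2 := hY Z
  omega

lemma Crit.inter {X Y : Set V} (hX : Crit G X) (hY : Crit G Y) : Crit G (X ∩ Y) := by
  intro Z
  have := supermod (G := G) X Y
  have h1 := hX (X ∪ Y)
  have h2 := hY Z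
  omega

lemma Crit.diff {X : Set V} (hX : Crit G X) : IsCritIndep G (X \ nbhd G X) := by
  set A := X \ nbhd G X with hA
  have hind : IsIndep G A := by
    intro u hu v hv hadj
    exact hv.2 ⟨u, hu.1, hadj⟩
  refine (critIndep_iff A).2 ⟨hind, ?_⟩
  have key : dG G X ≤ dG G A := by
    have hKsub : X ∩ nbhd G X ⊆ X := inter_subset_left
    have hcard : A.ncard + (X ∩ nbhd G X).ncard = X.ncard := by
      rw [hA]
      rw [← Set.diff_self_inter, Set.ncard_diff_add_ncard_of_subset hKsub]
    have hNsub : nbhd G A ⊆ nbhd G X \ (X ∩ nbhd G X) := by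
      intro v hv
      refine ⟨nbhd_mono diff_subset hv, ?_⟩
      rintro ⟨hvX, -⟩
      obtain ⟨a, haA, hadj⟩ := hv
      exact haA.2 ⟨v, hvX, hadj.symm⟩
    have hNcard : (nbhd G A).ncard + (X ∩ nbhd G X).ncard ≤ (nbhd G X).ncard := by
      have h1 : (nbhd G A).ncard ≤ (nbhd G X \ (X ∩ nbhd G X)).ncard :=
        Set.ncard_le_ncard hNsub (Set.toFinite _)
      have h2 : (nbhd G X \ (X ∩ nbhd G X)).ncard + (X ∩ nbhd G X).ncard
          = (nbhd G X).ncard :=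
        Set.ncard_diff_add_ncard_of_subset inter_subset_right
      omega
    simp only [dG_def]
    push_cast
    omega
  intro Z
  exact le_trans (hX Z) key

lemma exists_crit (G : SimpleGraph V) : ∃ X : Set V, Crit G X := by
  have : Nonempty (Set V) := ⟨∅⟩
  obtain ⟨X, hX⟩ := Finite.exists_max (fun X : Set V => dG G X)
  exact ⟨X, fun Y => hX Y⟩

lemma exists_maxCritIndep (G : SimpleGraph V) : ∃ S, IsMaxCritIndep G S := by
  obtain ⟨X, hX⟩ := exists_crit G
  have hne : Nonempty {S : Set V // IsCritIndep G S} := ⟨⟨X \ nbhd G X, hX.diff⟩⟩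
  obtain ⟨⟨S, hS⟩, hmax⟩ :=
    Finite.exists_max (fun S : {S : Set V // IsCritIndep G S} => S.1.ncard)
  exact ⟨S, hS, fun T hT => hmax ⟨T, hT⟩⟩

lemma Crit.hall {X : Set V} (hX : Crit G X) :
    ∃ f : V → V, InjOn f (nbhd G X) ∧ ∀ a ∈ nbhd G X, f a ∈ X ∧ G.Adj a (f a) := by
  classical
  have key : ∀ A : Set V, A ⊆ nbhd G X → A.ncard ≤ (nbhd G A ∩ X).ncard := by
    intro A hA
    have h1 := hX (X \ nbhd G A)
    have hc1 : (X \ nbhd G A).ncard + (X ∩ nbhd G A).ncard = X.ncard := by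
      rw [← Set.diff_self_inter]
      exact Set.ncard_diff_add_ncard_of_subset inter_subset_left
    have hNsub : nbhd G (X \ nbhd G A) ⊆ nbhd G X \ A := by
      intro v hv
      refine ⟨nbhd_mono diff_subset hv, fun hvA => ?_⟩
      obtain ⟨x, hx, hadj⟩ := hv
      exact hx.2 ⟨v, hvA, hadj.symm⟩
    have hc2 : (nbhd G (X \ nbhd G A)).ncard + A.ncard ≤ (nbhd G X).ncard := by
      have h2 := Set.ncard_le_ncard hNsub (Set.toFinite _)
      have h3 := Set.ncard_diff_add_ncard_of_subset hA (Set.toFinite _)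
      omega
    have heq : (X ∩ nbhd G A).ncard = (nbhd G A ∩ X).ncard := by rw [inter_comm]
    simp only [dG_def] at h1
    omega
  let t : ↥(nbhd G X) → Finset V :=
    fun a => ({v | G.Adj (a : V) v} ∩ X).toFinite.toFinset
  have hall : ∀ s : Finset ↥(nbhd G X), s.card ≤ (s.biUnion t).card := by
    intro s
    set A : Set V := Subtype.val '' (s : Set ↥(nbhd G X)) with hA
    have hAsub : A ⊆ nbhd G X := by rintro v ⟨a, -, rfl⟩; exact a.2
    have hcard : A.ncard = s.card := by
      rw [hA, Set.ncard_image_of_injOn (Subtype.val_injective.injOn)]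
      simp [Set.ncard_coe_finset]
    have hsets : ((s.biUnion t : Finset V) : Set V) = nbhd G A ∩ X := by
      ext v
      simp only [Finset.coe_biUnion, mem_iUnion, Finset.mem_coe, Set.Finite.mem_toFinset,
        mem_inter_iff, mem_setOf_eq, t]
      constructor
      · rintro ⟨a, ha, hadj, hvX⟩
        exact ⟨⟨a, ⟨a, ha, rfl⟩, hadj⟩, hvX⟩
      · rintro ⟨⟨u, ⟨a, ha, rfl⟩, hadj⟩, hvX⟩
        exact ⟨a, ha, hadj, hvX⟩
    calc s.card = A.ncard := hcard.symm
      _ ≤ (nbhd G A ∩ X).ncard := key A hAsub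
      _ = (s.biUnion t).card := by rw [← hsets, Set.ncard_coe_finset]
  obtain ⟨f0, hinj, hmem⟩ := (Finset.all_card_le_biUnion_card_iff_existsInjective' t).1 hall
  refine ⟨fun v => if h : v ∈ nbhd G X then f0 ⟨v, h⟩ else v, ?_, ?_⟩
  · intro a ha b hb hab
    simp only [dif_pos ha, dif_pos hb] at hab
    exact congrArg Subtype.val (hinj hab)
  · intro a ha
    simp only [dif_pos ha]
    have h := hmem ⟨a, ha⟩
    rw [Set.Finite.mem_toFinset] at h
    exact ⟨h.2, h.1⟩

lemma crit_sUnion {F : Set (Set V)} (hne : F.Nonempty) (hF : ∀ X ∈ F, Crit G X) :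
    Crit G (⋃₀ F) := by
  have hfin : F.Finite := Set.toFinite F
  have main : F.Nonempty → (∀ X ∈ F, Crit G X) → Crit G (⋃₀ F) := by
    refine Set.Finite.induction_on
      (motive := fun t _ => t.Nonempty → (∀ X ∈ t, Crit G X) → Crit G (⋃₀ t)) F hfin
      (fun h _ => absurd h (by simp)) ?_
    intro a s ha hs ih hne2 hF2
    rcases s.eq_empty_or_nonempty with rfl | hsne
    · simpa using hF2 a (mem_insert a ∅)
    · have h1 : Crit G a := hF2 a (mem_insert a s)
      have h2 : Crit G (⋃₀ s) := ih hsne (fun X hX => hF2 X (mem_insert_of_mem a hX))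
      rw [sUnion_insert]
      exact h1.union h2
  exact main hne hF

lemma crit_diadem (G : SimpleGraph V) : Crit G (diadem G) := by
  obtain ⟨S, hS⟩ := exists_maxCritIndep G
  exact crit_sUnion ⟨S, hS⟩ (fun X hX => ((critIndep_iff X).1 hX.1).2)

lemma subset_diadem {S : Set V} (hS : IsMaxCritIndep G S) : S ⊆ diadem G :=
  fun v hv => ⟨S, hS, hv⟩

lemma nucleus_subset {S : Set V} (hS : IsMaxCritIndep G S) : nucleus G ⊆ S :=
  fun v hv => hv S hS

lemma A0_subset {S : Set V} (hS : IsMaxCritIndep G S) :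
    diadem G \ nbhd G (diadem G) ⊆ S := by
  set A := diadem G \ nbhd G (diadem G) with hA
  have hAci : IsCritIndep G A := (crit_diadem G).diff
  obtain ⟨hSi, hSc⟩ := (critIndep_iff S).1 hS.1
  obtain ⟨hAi, hAc⟩ := (critIndep_iff A).1 hAci
  have hind : IsIndep G (S ∪ A) := by
    intro u hu v hv hadj
    rcases hu with hu | hu <;> rcases hv with hv | hv
    · exact hSi u hu v hv hadj
    · exact hv.2 ⟨u, subset_diadem hS hu, hadj⟩
    · exact hu.2 ⟨v, subset_diadem hS hv, hadj.symm⟩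
    · exact hAi u hu v hv hadj
  have hci : IsCritIndep G (S ∪ A) := (critIndep_iff _).2 ⟨hind, hSc.union hAc⟩
  have hle : (S ∪ A).ncard ≤ S.ncard := hS.2 _ hci
  have heq : S = S ∪ A :=
    Set.eq_of_subset_of_ncard_le subset_union_left hle (Set.toFinite _)
  intro v hv
  rw [heq]
  exact Or.inr hv

lemma nucleus_eq (G : SimpleGraph V) : nucleus G = diadem G \ nbhd G (diadem G) := by
  apply Set.Subset.antisymm
  · obtain ⟨S0, hS0⟩ := exists_maxCritIndep G
    intro v hv
    refine ⟨subset_diadem hS0 (hv S0 hS0), ?_⟩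
    rintro ⟨u, hu, hadj⟩
    obtain ⟨T, hT, huT⟩ := hu
    exact ((critIndep_iff T).1 hT.1).1 u huT v (hv T hT) hadj
  · intro v hv S hS
    exact A0_subset hS hv

lemma lemmaB {S T : Set V} (hS : IsMaxCritIndep G S) (hT : IsCritIndep G T) :
    T ⊆ S ∪ nbhd G S := by
  intro b hb
  by_contra hbn
  simp only [mem_union, not_or] at hbn
  obtain ⟨hbS, hbNS⟩ := hbn
  obtain ⟨hSi, hSc⟩ := (critIndep_iff S).1 hS.1
  obtain ⟨hTi, hTc⟩ := (critIndep_iff T).1 hT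
  have hU : Crit G (S ∪ T) := hSc.union hTc
  set Z := (S ∪ T) \ nbhd G (S ∪ T) with hZ
  have hZci : IsCritIndep G Z := hU.diff
  obtain ⟨hZi, hZc⟩ := (critIndep_iff Z).1 hZci
  have hbZ : b ∈ Z := by
    refine ⟨Or.inr hb, ?_⟩
    rw [nbhd_union]
    rintro (h | h)
    · exact hbNS h
    · exact indep_disj_nbhd hTi b hb h
  have hind : IsIndep G (S ∪ Z) := by
    intro u hu v hv hadj
    rcases hu with hu | hu <;> rcases hv with hv | hv
    · exact hSi u hu v hv hadj
    · exact hv.2 (by rw [nbhd_union]; exact Or.inl ⟨u, hu, hadj⟩)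
    · exact hu.2 (by rw [nbhd_union]; exact Or.inl ⟨v, hv, hadj.symm⟩)
    · exact hZi u hu v hv hadj
  have hci : IsCritIndep G (S ∪ Z) := (critIndep_iff _).2 ⟨hind, hSc.union hZc⟩
  have hle : (S ∪ Z).ncard ≤ S.ncard := hS.2 _ hci
  have heq : S = S ∪ Z :=
    Set.eq_of_subset_of_ncard_le subset_union_left hle (Set.toFinite _)
  apply hbS
  rw [heq]
  exact Or.inr hbZ

lemma half {S : Set V} (hS : IsMaxCritIndep G S) :
    2 * (S ∩ (diadem G ∩ nbhd G (diadem G))).ncard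
      = (diadem G ∩ nbhd G (diadem G)).ncard := by
  set D := diadem G with hD
  set B := D ∩ nbhd G D with hB
  obtain ⟨hSi, hSc⟩ := (critIndep_iff S).1 hS.1
  have hSD : S ⊆ D := subset_diadem hS
  -- first injection : S ∩ B → B \ S
  obtain ⟨g, hginj, hg⟩ := (crit_diadem G).hall
  have h1 : (S ∩ B).ncard ≤ (B \ S).ncard := by
    have hsub : S ∩ B ⊆ nbhd G D := fun x hx => hx.2.2
    have himg : g '' (S ∩ B) ⊆ B \ S := by
      rintro y ⟨x, hx, rfl⟩
      obtain ⟨hgD, hgadj⟩ := hg x (hsub hx)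
      refine ⟨⟨hgD, ⟨x, hx.2.1, hgadj⟩⟩, fun hgS => ?_⟩
      exact hSi x hx.1 (g x) hgS hgadj
    calc (S ∩ B).ncard = (g '' (S ∩ B)).ncard :=
          (Set.ncard_image_of_injOn (hginj.mono hsub)).symm
      _ ≤ (B \ S).ncard := Set.ncard_le_ncard himg (Set.toFinite _)
  -- second injection : B \ S → S ∩ B
  obtain ⟨f, hfinj, hf⟩ := hSc.hall
  have h2 : (B \ S).ncard ≤ (S ∩ B).ncard := by
    have hsub : B \ S ⊆ nbhd G S := by
      rintro b ⟨⟨hbD, hbN⟩, hbS⟩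
      obtain ⟨T, hT, hbT⟩ := hbD
      rcases lemmaB hS hT.1 hbT with h | h
      · exact absurd h hbS
      · exact h
    have himg : f '' (B \ S) ⊆ S ∩ B := by
      rintro y ⟨b, hb, rfl⟩
      obtain ⟨hfS, hfadj⟩ := hf b (hsub hb)
      exact ⟨hfS, hSD hfS, ⟨b, hb.1.1, hfadj⟩⟩
    calc (B \ S).ncard = (f '' (B \ S)).ncard :=
          (Set.ncard_image_of_injOn (hfinj.mono hsub)).symm
      _ ≤ (S ∩ B).ncard := Set.ncard_le_ncard himg (Set.toFinite _)
  have h3 : (B \ S).ncard + (B ∩ S).ncard = B.ncard := by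
    rw [← Set.diff_self_inter]
    exact Set.ncard_diff_add_ncard_of_subset inter_subset_left
  have h4 : (B ∩ S).ncard = (S ∩ B).ncard := by rw [inter_comm]
  omega

lemma chunk1 {S : Set V} (hS : IsMaxCritIndep G S) :
    (diadem G).ncard + (nucleus G).ncard = 2 * S.ncard := by
  set D := diadem G with hD
  set B := D ∩ nbhd G D with hB
  have hnuc : nucleus G = D \ nbhd G D := nucleus_eq G
  have hDsplit : (D \ nbhd G D).ncard + B.ncard = D.ncard := by
    rw [hB, ← Set.diff_self_inter]
    exact Set.ncard_diff_add_ncard_of_subset inter_subset_left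
  have hA0S : (D \ nbhd G D) ⊆ S := A0_subset hS
  have hSD : S ⊆ D := subset_diadem hS
  have hSsplit : (D \ nbhd G D).ncard + (S ∩ B).ncard = S.ncard := by
    have hSeq : S = (D \ nbhd G D) ∪ (S ∩ B) := by
      apply Subset.antisymm
      · intro v hv
        by_cases hvN : v ∈ nbhd G D
        · exact Or.inr ⟨hv, hSD hv, hvN⟩
        · exact Or.inl ⟨hSD hv, hvN⟩
      · rintro v (hv | hv)
        · exact hA0S hv
        · exact hv.1
    have hdisj : Disjoint (D \ nbhd G D) (S ∩ B) := by
      rw [Set.disjoint_left]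
      rintro v ⟨-, hvN⟩ ⟨-, -, hvB⟩
      exact hvN hvB
    calc (D \ nbhd G D).ncard + (S ∩ B).ncard
        = ((D \ nbhd G D) ∪ (S ∩ B)).ncard :=
          (Set.ncard_union_eq hdisj (Set.toFinite _) (Set.toFinite _)).symm
      _ = S.ncard := by rw [← hSeq]
  have hhalf := half hS
  rw [← hD, ← hB] at hhalf
  rw [hnuc]
  omega

lemma card_univ_ncard : (univ : Set V).ncard = Fintype.card V := by
  rw [Set.ncard_univ, Nat.card_eq_fintype_card]

lemma alpha_bdd (G : SimpleGraph V) :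
    BddAbove {n | ∃ S ⊆ (univ : Set V), IsIndep G S ∧ S.ncard = n} := by
  refine ⟨Fintype.card V, ?_⟩
  rintro n ⟨S, -, -, rfl⟩
  rw [← card_univ_ncard]
  exact Set.ncard_le_ncard (subset_univ S) (Set.toFinite _)

lemma indep_le_alpha {T : Set V} (hT : IsIndep G T) : T.ncard ≤ alpha G :=
  le_csSup (alpha_bdd G) ⟨T, subset_univ T, hT, rfl⟩

lemma exists_max_indep (G : SimpleGraph V) :
    ∃ S : Set V, IsIndep G S ∧ S.ncard = alpha G := by
  have hne : {n | ∃ S ⊆ (univ : Set V), IsIndep G S ∧ S.ncard = n}.Nonempty :=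
    ⟨0, ∅, empty_subset _, fun u hu => absurd hu (notMem_empty u), Set.ncard_empty V⟩
  obtain ⟨S, -, hSi, hSc⟩ := Nat.sSup_mem hne (alpha_bdd G)
  exact ⟨S, hSi, hSc⟩

lemma mu_bdd (G : SimpleGraph V) :
    BddAbove {n | ∃ M : G.Subgraph, M.IsMatching ∧ M.edgeSet.ncard = n} := by
  refine ⟨Nat.card (Sym2 V), ?_⟩
  rintro n ⟨M, -, rfl⟩
  rw [← Set.ncard_univ]
  exact Set.ncard_le_ncard (subset_univ _) (Set.toFinite _)

lemma le_mu {M : G.Subgraph} (hM : M.IsMatching) : M.edgeSet.ncard ≤ mu G :=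
  le_csSup (mu_bdd G) ⟨M, hM, rfl⟩

lemma exists_max_matching (G : SimpleGraph V) :
    ∃ M : G.Subgraph, M.IsMatching ∧ M.edgeSet.ncard = mu G := by
  have hne : {n | ∃ M : G.Subgraph, M.IsMatching ∧ M.edgeSet.ncard = n}.Nonempty := by
    refine ⟨0, ⊥, ?_, by simp [SimpleGraph.Subgraph.edgeSet_bot]⟩
    intro v hv
    simp only [SimpleGraph.Subgraph.verts_bot, mem_empty_iff_false] at hv
  exact Nat.sSup_mem hne (mu_bdd G)

lemma matching_partner {M : G.Subgraph} (hM : M.IsMatching) {v w w' : V}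
    (h1 : M.Adj v w) (h2 : M.Adj v w') : w = w' := by
  obtain ⟨u, -, huniq⟩ := hM (M.edge_vert h1)
  rw [huniq w h1, huniq w' h2]

lemma matching_verts_card {M : G.Subgraph} (hM : M.IsMatching) :
    M.verts.ncard = 2 * M.edgeSet.ncard := by
  classical
  have hpart : ∀ v : M.verts, ∃ w, M.Adj v.1 w := fun v => (hM v.2).exists
  choose p hp using hpart
  set ord : V → ℕ := fun v => ((Fintype.equivFin V) v).val with hord
  have hordinj : Function.Injective ord :=
    Fin.val_injective.comp (Fintype.equivFin V).injective
  set ψ : M.verts → M.edgeSet × Bool :=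
    fun v => (⟨s(v.1, p v), SimpleGraph.Subgraph.mem_edgeSet.2 (hp v)⟩,
      decide (ord v.1 < ord (p v))) with hψ
  have hinj : Function.Injective ψ := by
    intro v v' h
    have h1 : s(v.1, p v) = s(v'.1, p v') :=
      congrArg Subtype.val (congrArg Prod.fst h)
    have h2 : decide (ord v.1 < ord (p v)) = decide (ord v'.1 < ord (p v')) :=
      congrArg Prod.snd h
    rcases Sym2.eq_iff.1 h1 with ⟨h3, h4⟩ | ⟨h3, h4⟩
    · exact Subtype.ext h3
    · rw [← h3, h4] at h2
      have hiff := decide_eq_decide.1 h2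
      have : ord v.1 = ord v'.1 := by
        rcases lt_trichotomy (ord v.1) (ord v'.1) with hh | hh | hh
        · exact absurd (hiff.1 hh) (by omega)
        · exact hh
        · exact absurd (hiff.2 hh) (by omega)
      exact Subtype.ext (hordinj this)
  have hsurj : Function.Surjective ψ := by
    rintro ⟨⟨e, he⟩, b⟩
    induction e using Sym2.ind with | _ x y =>
    have hxy : M.Adj x y := SimpleGraph.Subgraph.mem_edgeSet.1 he
    have hyx : M.Adj y x := hxy.symm
    have hne : x ≠ y := (M.adj_sub hxy).ne
    have hx : x ∈ M.verts := M.edge_vert hxy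
    have hy : y ∈ M.verts := M.edge_vert hyx
    have hpx : p ⟨x, hx⟩ = y := matching_partner hM (hp ⟨x, hx⟩) hxy
    have hpy : p ⟨y, hy⟩ = x := matching_partner hM (hp ⟨y, hy⟩) hyx
    have hordne : ord x ≠ ord y := fun hh => hne (hordinj hh)
    by_cases hlt : ord x < ord y
    · cases b
      · refine ⟨⟨y, hy⟩, ?_⟩
        rw [hψ]
        refine Prod.ext (Subtype.ext ?_) ?_
        · simp only [hpy]; exact Sym2.eq_swap
        · simp only [hpy]
          simpa using by omega
      · refine ⟨⟨x, hx⟩, ?_⟩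
        rw [hψ]
        refine Prod.ext (Subtype.ext ?_) ?_
        · simp only [hpx]
        · simp only [hpx]
          simpa using hlt
    · have hlt' : ord y < ord x := by omega
      cases b
      · refine ⟨⟨x, hx⟩, ?_⟩
        rw [hψ]
        refine Prod.ext (Subtype.ext ?_) ?_
        · simp only [hpx]
        · simp only [hpx]
          simpa using by omega
      · refine ⟨⟨y, hy⟩, ?_⟩
        rw [hψ]
        refine Prod.ext (Subtype.ext ?_) ?_
        · simp only [hpy]; exact Sym2.eq_swap
        · simp only [hpy]
          simpa using hlt'
  have hcard := Nat.card_eq_of_bijective ψ ⟨hinj, hsurj⟩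
  rw [Nat.card_prod] at hcard
  have hb : Nat.card Bool = 2 := by
    rw [Nat.card_eq_fintype_card]; rfl
  rw [hb, Nat.card_coe_set_eq, Nat.card_coe_set_eq] at hcard
  omega

lemma ncard_prod_singleton (s : Set V) (b : Bool) :
    (s ×ˢ ({b} : Set Bool)).ncard = s.ncard := by
  have himg : s ×ˢ ({b} : Set Bool) = (fun x => (x, b)) '' s := by
    ext ⟨x, y⟩
    simp only [mem_prod, mem_singleton_iff, mem_image, Prod.mk.injEq]
    constructor
    · rintro ⟨hx, rfl⟩; exact ⟨x, hx, rfl, rfl⟩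
    · rintro ⟨a, ha, rfl, rfl⟩; exact ⟨ha, rfl⟩
  rw [himg]
  exact Set.ncard_image_of_injective s (fun a a' h => by simpa using congrArg Prod.fst h)

lemma matching_token {M : G.Subgraph} (hM : M.IsMatching) (X : Set V) :
    M.verts.ncard ≤ (Xᶜ : Set V).ncard + (nbhd G X).ncard := by
  classical
  have hpart : ∀ v : M.verts, ∃ w, M.Adj v.1 w := fun v => (hM v.2).exists
  choose p hp using hpart
  set F : M.verts → V × Bool :=
    fun v => if v.1 ∈ X then (p v, true) else (v.1, false) with hF
  have hinj : Function.Injective F := by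
    intro v v' h
    by_cases h1 : v.1 ∈ X <;> by_cases h2 : v'.1 ∈ X <;>
      simp only [hF, if_pos, if_neg, h1, h2, if_true, if_false, ite_true, ite_false,
        Prod.mk.injEq] at h
    · have h3 : M.Adj (p v) v.1 := (hp v).symm
      have h4 : M.Adj (p v) v'.1 := h.1 ▸ (hp v').symm
      exact Subtype.ext (matching_partner hM h3 h4)
    · exact absurd h.2 (by simp)
    · exact absurd h.2 (by simp)
    · exact Subtype.ext h.1
  have himg : Set.range F ⊆ ((Xᶜ : Set V) ×ˢ ({false} : Set Bool))
      ∪ ((nbhd G X) ×ˢ ({true} : Set Bool)) := by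
    rintro _ ⟨v, rfl⟩
    by_cases h1 : v.1 ∈ X
    · right
      simp only [hF, if_pos h1]
      exact ⟨⟨v.1, h1, M.adj_sub (hp v)⟩, rfl⟩
    · left
      simp only [hF, if_neg h1]
      exact ⟨h1, rfl⟩
  have h1 : M.verts.ncard = (Set.range F).ncard := by
    rw [← Nat.card_coe_set_eq, ← Nat.card_range_of_injective hinj,
      Nat.card_coe_set_eq]
  rw [h1]
  calc (Set.range F).ncard
      ≤ (((Xᶜ : Set V) ×ˢ ({false} : Set Bool))
          ∪ ((nbhd G X) ×ˢ ({true} : Set Bool))).ncard :=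
        Set.ncard_le_ncard himg (Set.toFinite _)
    _ ≤ ((Xᶜ : Set V) ×ˢ ({false} : Set Bool)).ncard
          + ((nbhd G X) ×ˢ ({true} : Set Bool)).ncard := Set.ncard_union_le _ _
    _ = (Xᶜ : Set V).ncard + (nbhd G X).ncard := by
        rw [ncard_prod_singleton, ncard_prod_singleton]

lemma matching_edge_eq {M : G.Subgraph} (hM : M.IsMatching) {e e' : Sym2 V} {v : V}
    (he : e ∈ M.edgeSet) (he' : e' ∈ M.edgeSet) (hv : v ∈ e) (hv' : v ∈ e') : e = e' := by
  induction e using Sym2.ind with | _ x y =>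
  induction e' using Sym2.ind with | _ x' y' =>
  rw [SimpleGraph.Subgraph.mem_edgeSet] at he he'
  rw [Sym2.mem_iff] at hv hv'
  rcases hv with rfl | rfl <;> rcases hv' with rfl | rfl
  · rw [matching_partner hM he he']
  · rw [matching_partner hM he he'.symm, Sym2.eq_swap]
  · rw [matching_partner hM he.symm he', Sym2.eq_swap]
  · rw [matching_partner hM he.symm he'.symm]

lemma mu_le (G : SimpleGraph V) : mu G + alpha G ≤ Fintype.card V := by
  classical
  obtain ⟨S, hSi, hSa⟩ := exists_max_indep G
  obtain ⟨M, hM, hMc⟩ := exists_max_matching G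
  have hch : ∀ e : Sym2 V, ∃ v, e ∈ M.edgeSet → (v ∈ e ∧ v ∉ S) := by
    intro e
    induction e using Sym2.ind with | _ x y =>
    by_cases he : s(x, y) ∈ M.edgeSet
    · have hxy := M.adj_sub (SimpleGraph.Subgraph.mem_edgeSet.1 he)
      by_cases hx : x ∈ S
      · exact ⟨y, fun _ => ⟨Sym2.mem_mk_right x y, fun hy => hSi x hx y hy hxy⟩⟩
      · exact ⟨x, fun _ => ⟨Sym2.mem_mk_left x y, hx⟩⟩
    · exact ⟨x, fun h => absurd h he⟩
  choose φ hφ using hch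
  have hinj : InjOn φ M.edgeSet := by
    intro e he e' he' heq
    have hx' : φ e ∈ e' := by rw [heq]; exact (hφ e' he').1
    exact matching_edge_eq hM he he' ((hφ e he).1) hx'
  have himg : φ '' M.edgeSet ⊆ (Sᶜ : Set V) := by
    rintro _ ⟨e, he, rfl⟩
    exact (hφ e he).2
  have h1 : M.edgeSet.ncard ≤ (Sᶜ : Set V).ncard := by
    rw [← Set.ncard_image_of_injOn hinj]
    exact Set.ncard_le_ncard himg (Set.toFinite _)
  have h2 : S.ncard + (Sᶜ : Set V).ncard = Fintype.card V := by
    have := Set.ncard_add_ncard_compl S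
    rw [Nat.card_eq_fintype_card] at this
    omega
  omega

lemma larson_fwd (h : IsKE G) {S : Set V} (hS : IsIndep G S) (hS2 : S.ncard = alpha G) :
    Crit G S := by
  intro X
  obtain ⟨M, hM, hMcard⟩ := exists_max_matching G
  have htok := matching_token hM X
  have hvc := matching_verts_card hM
  have hcomplX : (Xᶜ : Set V).ncard + X.ncard = Fintype.card V := by
    have := Set.ncard_add_ncard_compl X
    rw [Nat.card_eq_fintype_card] at this
    omega
  have hNS : (nbhd G S).ncard + S.ncard ≤ Fintype.card V := by
    have hsub : nbhd G S ⊆ (Sᶜ : Set V) := fun v hv hvS => indep_disj_nbhd hS v hvS hv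
    have h1 : (nbhd G S).ncard ≤ (Sᶜ : Set V).ncard :=
      Set.ncard_le_ncard hsub (Set.toFinite _)
    have h2 : S.ncard + (Sᶜ : Set V).ncard = Fintype.card V := by
      have := Set.ncard_add_ncard_compl S
      rw [Nat.card_eq_fintype_card] at this
      omega
    omega
  have hKE : alpha G + mu G = Fintype.card V := h
  simp only [dG_def]
  omega

lemma larson_bwd {S : Set V} (hS : IsCritIndep G S) (hS2 : S.ncard = alpha G) : IsKE G := by
  obtain ⟨hSi, hSc⟩ := (critIndep_iff S).1 hS
  have hdisj : ∀ v ∈ S, v ∉ nbhd G S := fun v hv => indep_disj_nbhd hSi v hv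
  have hcover : ∀ v : V, v ∈ S ∨ v ∈ nbhd G S := by
    intro v
    by_contra hv
    push_neg at hv
    obtain ⟨hv1, hv2⟩ := hv
    have hind : IsIndep G (insert v S) := by
      intro a ha b hb hadj
      rcases ha with rfl | ha
      · rcases hb with rfl | hb
        · exact G.loopless.irrefl _ hadj
        · exact hv2 ⟨b, hb, hadj.symm⟩
      · rcases hb with rfl | hb
        · exact hv2 ⟨a, ha, hadj⟩
        · exact hSi a ha b hb hadj
    have hle : (insert v S).ncard ≤ alpha G := indep_le_alpha hind
    have hcard : (insert v S).ncard = S.ncard + 1 :=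
      Set.ncard_insert_of_notMem hv1 (Set.toFinite _)
    omega
  obtain ⟨f, hfinj, hf⟩ := hSc.hall
  have hfS : ∀ a ∈ nbhd G S, f a ∈ S := fun a ha => (hf a ha).1
  have himdisj : ∀ x, x ∈ nbhd G S → x ∈ f '' nbhd G S → False := by
    rintro x hx ⟨a, ha, rfl⟩
    exact hdisj (f a) (hfS a ha) hx
  set Msub : G.Subgraph :=
    { verts := nbhd G S ∪ (f '' nbhd G S)
      Adj := fun x y => (∃ _ : x ∈ nbhd G S, f x = y) ∨ (∃ _ : y ∈ nbhd G S, f y = x)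
      adj_sub := by
        rintro x y (⟨hx, rfl⟩ | ⟨hy, rfl⟩)
        · exact (hf x hx).2
        · exact ((hf y hy).2).symm
      edge_vert := by
        rintro x y (⟨hx, rfl⟩ | ⟨hy, rfl⟩)
        · exact Or.inl hx
        · exact Or.inr ⟨y, hy, rfl⟩
      symm := by
        constructor
        rintro x y (h | h)
        · exact Or.inr h
        · exact Or.inl h } with hMsub
  have hmatch : Msub.IsMatching := by
    rintro v (hv | hv)
    · refine ⟨f v, Or.inl ⟨hv, rfl⟩, ?_⟩
      rintro y (⟨h1, rfl⟩ | ⟨h1, h2⟩)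
      · rfl
      · exact (himdisj v hv ⟨y, h1, h2⟩).elim
    · obtain ⟨a, ha, rfl⟩ := hv
      refine ⟨a, Or.inr ⟨ha, rfl⟩, ?_⟩
      rintro y (⟨h1, h2⟩ | ⟨h1, h2⟩)
      · exact (himdisj (f a) h1 ⟨a, ha, rfl⟩).elim
      · exact hfinj h1 ha h2
  have hedge : Msub.edgeSet = (fun a => s(a, f a)) '' (nbhd G S) := by
    ext e
    induction e using Sym2.ind with | _ x y =>
    rw [SimpleGraph.Subgraph.mem_edgeSet]
    constructor
    · rintro (⟨hx, rfl⟩ | ⟨hy, rfl⟩)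
      · exact ⟨x, hx, rfl⟩
      · exact ⟨y, hy, Sym2.eq_swap⟩
    · rintro ⟨c, hc, hce⟩
      rcases Sym2.eq_iff.1 hce with ⟨rfl, rfl⟩ | ⟨rfl, rfl⟩
      · exact Or.inl ⟨hc, rfl⟩
      · exact Or.inr ⟨hc, rfl⟩
  have hecard : Msub.edgeSet.ncard = (nbhd G S).ncard := by
    rw [hedge]
    apply Set.ncard_image_of_injOn
    intro a ha b hb hab
    rcases Sym2.eq_iff.1 hab with ⟨h1, -⟩ | ⟨h1, h2⟩
    · exact h1
    · exact (hdisj (f b) (hfS b hb) (h1 ▸ ha)).elim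
  have hmu : (nbhd G S).ncard ≤ mu G := hecard ▸ le_mu hmatch
  have hmu2 : mu G + alpha G ≤ Fintype.card V := mu_le G
  have hn : S.ncard + (nbhd G S).ncard = Fintype.card V := by
    have hun : S ∪ nbhd G S = univ := eq_univ_of_forall (fun v => hcover v)
    have hd : Disjoint S (nbhd G S) := Set.disjoint_left.2 hdisj
    have := Set.ncard_union_eq hd (Set.toFinite _) (Set.toFinite _)
    rw [hun, card_univ_ncard] at this
    omega
  show alpha G + mu G = Fintype.card V
  omega

theorem stmt13' (G : SimpleGraph V) :
    IsKE G ↔ (diadem G).ncard + (nucleus G).ncard = 2 * alpha G := by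
  obtain ⟨S, hS⟩ := exists_maxCritIndep G
  have h1 := chunk1 hS
  constructor
  · intro hke
    obtain ⟨T, hT, hTa⟩ := exists_max_indep G
    have hcrit : IsCritIndep G T := (critIndep_iff T).2 ⟨hT, larson_fwd hke hT hTa⟩
    have : S.ncard = alpha G := le_antisymm (indep_le_alpha ((critIndep_iff S).1 hS.1).1)
      (hTa ▸ hS.2 T hcrit)
    rw [h1, this]
  · intro heq
    have : S.ncard = alpha G := by
      have hle : S.ncard ≤ alpha G := indep_le_alpha ((critIndep_iff S).1 hS.1).1
      omega
    exact larson_bwd hS.1 this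

end KE13

/-- `G` is König-Egerváry iff `|diadem(G)| + |nucleus(G)| = 2α(G)`. -/
theorem stmt13 (G : SimpleGraph V) :
    IsKE G ↔ (diadem G).ncard + (nucleus G).ncard = 2 * alpha G := stmt13' G
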